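/- arXiv:1001.5183 — 3 statements merged into one kernel-verified Lean document; each statement's English description precedes it below -/
import Mathlib

section
/- Let ⟨G,p,w⟩ be an energy parity game with n = |Q| ≥ 2 states, and let w'(q,q') = w(q,q') + Δ(q) with Δ(q) = (−1)^{p(q)} · (1/n^{p(q)+1} − 1/n^{p(q)+2}). Then for every state q, player 1 has a memoryless strategy that is good-for-energy in q in the energy parity game ⟨G,p,w⟩ if and only if player 1 has a memoryless strategy that wins the energy game ⟨G,w'⟩ from q with some finite initial credit (i.e., some memoryless strategy whose every outcome from q satisfies the energy condition with respect to w' for some initial credit). -/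
variable {Q : Type*}

/-- A play: an infinite path in the edge relation `E`. -/
def IsPlay (E : Q → Q → Prop) (ρ : ℕ → Q) : Prop :=
  ∀ i, E (ρ i) (ρ (i + 1))

/-- Energy level of the prefix of length `n` of `ρ`. -/
def EL (w : Q → Q → ℤ) (ρ : ℕ → Q) (n : ℕ) : ℤ :=
  ∑ i ∈ Finset.range n, w (ρ i) (ρ (i + 1))

/-- Energy condition with initial credit `c₀`. -/
def EnergyCond (w : Q → Q → ℤ) (c₀ : ℕ) (ρ : ℕ → Q) : Prop :=
  ∀ n, 0 ≤ (c₀ : ℤ) + EL w ρ n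

/-- The state `q` occurs infinitely often in `ρ`. -/
def InfOften (ρ : ℕ → Q) (q : Q) : Prop :=
  ∀ N, ∃ n, N ≤ n ∧ ρ n = q

/-- Parity condition: the minimum priority occurring infinitely often is even. -/
def ParityCond (p : Q → ℕ) (ρ : ℕ → Q) : Prop :=
  ∃ q, InfOften ρ q ∧ Even (p q) ∧ ∀ q', InfOften ρ q' → p q ≤ p q'

/-- An outcome of the memoryless player-1 strategy `σ` from `q₀`. -/
def MemlessOutcome (Q1 : Set Q) (E : Q → Q → Prop) (σ : Q → Q) (q₀ : Q)
    (ρ : ℕ → Q) : Prop :=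
  ρ 0 = q₀ ∧ IsPlay E ρ ∧ ∀ i, ρ i ∈ Q1 → ρ (i + 1) = σ (ρ i)

/-- The minimal priority on the cycle `ρ i, …, ρ (i+k)` is even. -/
def MinPrioEven (p : Q → ℕ) (ρ : ℕ → Q) (i k : ℕ) : Prop :=
  ∃ j ∈ Finset.Icc i (i + k), Even (p (ρ j)) ∧
    ∀ l ∈ Finset.Icc i (i + k), p (ρ j) ≤ p (ρ l)

/-- The memoryless strategy `σ` is good-for-energy in `q`: every cycle of every outcome
of `σ` from `q` has positive energy level, or zero energy level and even minimal
priority. -/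
def GoodForEnergy (Q1 : Set Q) (E : Q → Q → Prop) (p : Q → ℕ) (w : Q → Q → ℤ)
    (σ : Q → Q) (q : Q) : Prop :=
  ∀ ρ, MemlessOutcome Q1 E σ q ρ → ∀ i k, 0 < k → ρ i = ρ (i + k) →
    0 < ∑ j ∈ Finset.Ico i (i + k), w (ρ j) (ρ (j + 1)) ∨
      (∑ j ∈ Finset.Ico i (i + k), w (ρ j) (ρ (j + 1)) = 0 ∧ MinPrioEven p ρ i k)

namespace Stmt13Aux

/-- The play obtained from `ρ` by cutting out the cycle from position `a` to `a + d`. -/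
def skipAt (ρ : ℕ → Q) (a d : ℕ) : ℕ → Q := fun t => if t < a then ρ t else ρ (t + d)

lemma skipAt_le (ρ : ℕ → Q) {a d : ℕ} (h : ρ a = ρ (a + d)) {t : ℕ} (ht : t ≤ a) :
    skipAt ρ a d t = ρ t := by
  unfold skipAt
  rcases lt_or_eq_of_le ht with h1 | rfl
  · simp [h1]
  · simp [h.symm]

lemma skipAt_ge (ρ : ℕ → Q) {a d t : ℕ} (ht : a ≤ t) : skipAt ρ a d t = ρ (t + d) := by
  unfold skipAt
  simp [Nat.not_lt.mpr ht]

lemma skipAt_outcome {Q1 : Set Q} {E : Q → Q → Prop} {σ : Q → Q} {q : Q} {ρ : ℕ → Q}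
    (hρ : MemlessOutcome Q1 E σ q ρ) {a d : ℕ} (h : ρ a = ρ (a + d)) :
    MemlessOutcome Q1 E σ q (skipAt ρ a d) := by
  obtain ⟨h0, hp, hσ⟩ := hρ
  refine ⟨by rw [skipAt_le ρ h (Nat.zero_le a)]; exact h0, ?_, ?_⟩
  · intro t
    rcases le_or_gt (t + 1) a with h1 | h1
    · rw [skipAt_le ρ h (by omega), skipAt_le ρ h h1]; exact hp t
    · have h2 : a ≤ t := by omega
      rw [skipAt_ge ρ h2, skipAt_ge ρ (by omega)]
      have := hp (t + d); convert this using 2; omega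
  · intro t htQ1
    rcases le_or_gt a t with h2 | h2
    · rw [skipAt_ge ρ (by omega : a ≤ t + 1)]
      rw [skipAt_ge ρ h2] at htQ1 ⊢
      have := hσ (t + d) htQ1
      convert this using 2; omega
    · rw [skipAt_le ρ h (by omega : t ≤ a)] at htQ1 ⊢
      rw [skipAt_le ρ h (by omega : t + 1 ≤ a)]
      exact hσ t htQ1

lemma skipAt_sum {M : Type*} [AddCommGroup M] (v : Q → Q → M) (ρ : ℕ → Q)
    {a d : ℕ} (h : ρ a = ρ (a + d)) {m : ℕ} (hm : a ≤ m) :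
    ∑ t ∈ Finset.range m, v (skipAt ρ a d t) (skipAt ρ a d (t + 1))
      = ∑ t ∈ Finset.range (m + d), v (ρ t) (ρ (t + 1))
        - ∑ t ∈ Finset.Ico a (a + d), v (ρ t) (ρ (t + 1)) := by
  have hlow : ∀ t < a, v (skipAt ρ a d t) (skipAt ρ a d (t + 1)) = v (ρ t) (ρ (t + 1)) := by
    intro t ht
    rw [skipAt_le ρ h (by omega), skipAt_le ρ h (by omega)]
  have hhigh : ∀ t, a ≤ t → v (skipAt ρ a d t) (skipAt ρ a d (t + 1))
      = v (ρ (t + d)) (ρ (t + d + 1)) := by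
    intro t ht
    rw [skipAt_ge ρ ht, skipAt_ge ρ (by omega : a ≤ t + 1)]
    have : t + 1 + d = t + d + 1 := by omega
    rw [this]
  have e1 : ∑ t ∈ Finset.Ico 0 a, v (skipAt ρ a d t) (skipAt ρ a d (t + 1))
      = ∑ t ∈ Finset.Ico 0 a, v (ρ t) (ρ (t + 1)) := by
    apply Finset.sum_congr rfl
    intro t ht
    exact hlow t (Finset.mem_Ico.mp ht).2
  have e2 : ∑ t ∈ Finset.Ico a m, v (skipAt ρ a d t) (skipAt ρ a d (t + 1))
      = ∑ t ∈ Finset.Ico (a + d) (m + d), v (ρ t) (ρ (t + 1)) := by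
    rw [Finset.sum_Ico_eq_sum_range, Finset.sum_Ico_eq_sum_range]
    have hmd : m + d - (a + d) = m - a := by omega
    rw [hmd]
    apply Finset.sum_congr rfl
    intro t _
    rw [hhigh (a + t) (by omega)]
    congr 2 <;> omega
  have t1 := Finset.sum_Ico_consecutive (fun t => v (ρ t) (ρ (t + 1)))
    (by omega : (0:ℕ) ≤ a) (by omega : a ≤ a + d)
  have t2 := Finset.sum_Ico_consecutive (fun t => v (ρ t) (ρ (t + 1)))
    (by omega : (0:ℕ) ≤ a + d) (by omega : a + d ≤ m + d)
  have t3 := Finset.sum_Ico_consecutive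
    (fun t => v (skipAt ρ a d t) (skipAt ρ a d (t + 1)))
    (by omega : (0:ℕ) ≤ a) hm
  simp only [Finset.range_eq_Ico]
  rw [← t3, e1, e2, ← t2, ← t1]
  abel

/-- The play obtained from `ρ` by looping forever on the cycle from `i` to `i + k`. -/
def loopAt (ρ : ℕ → Q) (i k : ℕ) : ℕ → Q := fun t => if t < i then ρ t else ρ (i + (t - i) % k)

lemma loopAt_eq_of_le (ρ : ℕ → Q) {i k : ℕ} (hk : 0 < k) (h : ρ i = ρ (i + k))
    {t : ℕ} (ht : t ≤ i + k) : loopAt ρ i k t = ρ t := by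
  unfold loopAt
  rcases lt_or_ge t i with h1 | h1
  · simp [h1]
  · simp only [Nat.not_lt.mpr h1, if_false]
    rcases lt_or_eq_of_le ht with h2 | h2
    · rw [Nat.mod_eq_of_lt (by omega)]; congr 1; omega
    · have : (t - i) % k = 0 := by
        have : t - i = k := by omega
        simp [this]
      rw [this]
      simp only [Nat.add_zero]
      rw [h, h2]

lemma loopAt_ge (ρ : ℕ → Q) {i k t : ℕ} (ht : i ≤ t) :
    loopAt ρ i k t = ρ (i + (t - i) % k) := by
  unfold loopAt; simp [Nat.not_lt.mpr ht]

lemma loopAt_periodic (ρ : ℕ → Q) {i k t : ℕ} (ht : i ≤ t) :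
    loopAt ρ i k (t + k) = loopAt ρ i k t := by
  rw [loopAt_ge ρ ht, loopAt_ge ρ (by omega)]
  congr 2
  have : t + k - i = (t - i) + k := by omega
  rw [this, Nat.add_mod_right]

lemma loopAt_outcome {Q1 : Set Q} {E : Q → Q → Prop} {σ : Q → Q} {q : Q} {ρ : ℕ → Q}
    (hρ : MemlessOutcome Q1 E σ q ρ) {i k : ℕ} (hk : 0 < k) (h : ρ i = ρ (i + k)) :
    MemlessOutcome Q1 E σ q (loopAt ρ i k) := by
  obtain ⟨h0, hp, hσ⟩ := hρ
  have hsucc : ∀ t : ℕ, i ≤ t →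
      loopAt ρ i k (t + 1) = ρ (i + (t - i) % k + 1) := by
    intro t ht
    have hr : (t - i) % k < k := Nat.mod_lt _ hk
    rw [loopAt_ge ρ (by omega : i ≤ t + 1)]
    have hmod : (t + 1 - i) % k = ((t - i) % k + 1) % k := by
      have h1 : t + 1 - i = (t - i) + 1 := by omega
      rw [h1]
      exact ((Nat.mod_modEq (t - i) k).add_right 1).symm
    rw [hmod]
    rcases Nat.lt_or_ge ((t - i) % k + 1) k with h2 | h2
    · rw [Nat.mod_eq_of_lt h2, Nat.add_assoc]
    · have h3 : (t - i) % k + 1 = k := by omega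
      rw [h3, Nat.mod_self, Nat.add_zero, h]
      have h4 : i + k = i + (t - i) % k + 1 := by omega
      rw [h4]
  have hcur : ∀ t : ℕ, i ≤ t → loopAt ρ i k t = ρ (i + (t - i) % k) := fun t ht =>
    loopAt_ge ρ ht
  refine ⟨by rw [loopAt_eq_of_le ρ hk h (Nat.zero_le _)]; exact h0, ?_, ?_⟩
  · intro t
    rcases lt_or_ge t i with h1 | h1
    · rw [loopAt_eq_of_le ρ hk h (by omega), loopAt_eq_of_le ρ hk h (by omega)]
      exact hp t
    · rw [hcur t h1, hsucc t h1]
      exact hp (i + (t - i) % k)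
  · intro t htQ1
    rcases lt_or_ge t i with h1 | h1
    · rw [loopAt_eq_of_le ρ hk h (by omega)] at htQ1 ⊢
      rw [loopAt_eq_of_le ρ hk h (by omega)]
      exact hσ t htQ1
    · rw [hcur t h1] at htQ1 ⊢
      rw [hsucc t h1]
      exact hσ (i + (t - i) % k) htQ1

lemma loopAt_sum {M : Type*} [AddCommMonoid M] (v : Q → Q → M) (ρ : ℕ → Q)
    {i k : ℕ} (hk : 0 < k) (h : ρ i = ρ (i + k)) (t : ℕ) :
    ∑ j ∈ Finset.range (i + t * k), v (loopAt ρ i k j) (loopAt ρ i k (j + 1))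
      = (∑ j ∈ Finset.range i, v (ρ j) (ρ (j + 1)))
        + t • ∑ j ∈ Finset.Ico i (i + k), v (ρ j) (ρ (j + 1)) := by
  set g : ℕ → M := fun j => v (loopAt ρ i k j) (loopAt ρ i k (j + 1)) with hg
  have gper : ∀ x : ℕ, i ≤ x → g (x + k) = g x := by
    intro x hx
    simp only [hg]
    rw [loopAt_periodic ρ hx]
    congr 1
    have : x + k + 1 = (x + 1) + k := by omega
    rw [this, loopAt_periodic ρ (by omega)]
  have gshift : ∀ s j : ℕ, g (i + s * k + j) = g (i + j) := by
    intro s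
    induction s with
    | zero => simp
    | succ s ih =>
      intro j
      have : i + (s + 1) * k + j = (i + s * k + j) + k := by ring
      rw [this, gper _ (by omega), ih j]
  have hbase : ∀ j < i + k, g j = v (ρ j) (ρ (j + 1)) := by
    intro j hj
    simp only [hg]
    rw [loopAt_eq_of_le ρ hk h (by omega), loopAt_eq_of_le ρ hk h (by omega)]
  induction t with
  | zero =>
    simp only [Nat.zero_eq, Nat.zero_mul, Nat.add_zero, zero_smul, add_zero]
    exact Finset.sum_congr rfl fun j hj => hbase j (by
      have := Finset.mem_range.mp hj; omega)
  | succ t ih =>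
    have hsplit : i + (t + 1) * k = (i + t * k) + k := by ring
    rw [hsplit, Finset.range_eq_Ico,
      ← Finset.sum_Ico_consecutive _ (Nat.zero_le (i + t * k)) (by omega),
      ← Finset.range_eq_Ico, ih]
    have hchunk : ∑ j ∈ Finset.Ico (i + t * k) (i + t * k + k), g j
        = ∑ j ∈ Finset.Ico i (i + k), v (ρ j) (ρ (j + 1)) := by
      rw [Finset.sum_Ico_eq_sum_range, Finset.sum_Ico_eq_sum_range]
      have h1 : i + t * k + k - (i + t * k) = k := by omega
      have h2 : i + k - i = k := by omega
      rw [h1, h2]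
      apply Finset.sum_congr rfl
      intro j hj
      have hjk : j < k := Finset.mem_range.mp hj
      rw [gshift t j, hbase (i + j) (by omega)]
    rw [hchunk, succ_nsmul]
    abel

lemma core_arith {n : ℕ} (hn : 2 ≤ n) (s : Finset ℕ) (hcard : s.card ≤ n)
    (g : ℕ → ℕ) (ε : ℕ → ℚ) (hε : ∀ t ∈ s, ε t = 1 ∨ ε t = -1)
    {j : ℕ} (hj : j ∈ s) (hεj : ε j = 1)
    (hmin : ∀ t ∈ s, g j ≤ g t)
    (hflat : ∀ t ∈ s, g t = g j → ε t = 1) :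
    ((n : ℚ) - 1) / (n : ℚ) ^ (g j + 3)
      ≤ ∑ t ∈ s, ε t * (((n : ℚ) - 1) / (n : ℚ) ^ (g t + 2)) := by
  have h2q : (2 : ℚ) ≤ (n : ℚ) := by exact_mod_cast hn
  have hn0 : (0 : ℚ) < (n : ℚ) := by linarith
  have hn1 : (1 : ℚ) ≤ (n : ℚ) := by linarith
  have hnum : (0 : ℚ) ≤ (n : ℚ) - 1 := by linarith
  set f : ℕ → ℚ := fun x => ((n : ℚ) - 1) / (n : ℚ) ^ (x + 2) with hf
  have hfpos : ∀ x, 0 ≤ f x := fun x => div_nonneg hnum (by positivity)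
  have hfmono : ∀ x y : ℕ, x ≤ y → f y ≤ f x := by
    intro x y hxy
    exact div_le_div_of_nonneg_left hnum (by positivity)
      (pow_le_pow_right₀ hn1 (by omega))
  rw [← Finset.add_sum_erase s _ hj, hεj, one_mul]
  have hbound : ∀ t ∈ s.erase j, -(f (g j + 1)) ≤ ε t * f (g t) := by
    intro t ht
    have hts : t ∈ s := Finset.mem_of_mem_erase ht
    rcases hε t hts with h1 | h1
    · rw [h1, one_mul]
      have := hfpos (g t)
      have := hfpos (g j + 1)
      linarith
    · rw [h1, neg_one_mul]
      have hne : g t ≠ g j := by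
        intro hgt
        have := hflat t hts hgt
        rw [h1] at this
        norm_num at this
      have hge : g j + 1 ≤ g t := by
        have := hmin t hts
        omega
      have := hfmono (g j + 1) (g t) hge
      linarith
  have hsum : -((s.card - 1 : ℕ) * f (g j + 1)) ≤ ∑ t ∈ s.erase j, ε t * f (g t) := by
    have := Finset.sum_le_sum hbound
    rw [Finset.sum_const] at this
    rw [Finset.card_erase_of_mem hj] at this
    calc -((s.card - 1 : ℕ) * f (g j + 1))
        = (s.card - 1 : ℕ) • (-(f (g j + 1))) := by
          rw [nsmul_eq_mul]; ring
      _ ≤ _ := this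
  have hcard1 : ((s.card - 1 : ℕ) : ℚ) ≤ (n : ℚ) - 1 := by
    have h1 : 1 ≤ s.card := Finset.card_pos.mpr ⟨j, hj⟩
    have h2 : s.card - 1 ≤ n - 1 := by omega
    calc ((s.card - 1 : ℕ) : ℚ) ≤ ((n - 1 : ℕ) : ℚ) := by exact_mod_cast h2
      _ = (n : ℚ) - 1 := by
          have : (1 : ℕ) ≤ n := by omega
          push_cast [this]
          ring
  have hkey : ((n : ℚ) - 1) / (n : ℚ) ^ (g j + 3)
      = f (g j) - ((n : ℚ) - 1) * f (g j + 1) := by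
    simp only [hf]
    have hne : (n : ℚ) ≠ 0 := ne_of_gt hn0
    field_simp
    ring
  have hstep : ((s.card - 1 : ℕ) : ℚ) * f (g j + 1) ≤ ((n : ℚ) - 1) * f (g j + 1) :=
    mul_le_mul_of_nonneg_right hcard1 (hfpos _)
  calc ((n : ℚ) - 1) / (n : ℚ) ^ (g j + 3)
      = f (g j) - ((n : ℚ) - 1) * f (g j + 1) := hkey
    _ ≤ f (g j) - ((s.card - 1 : ℕ) : ℚ) * f (g j + 1) := by linarith
    _ ≤ f (g j) + ∑ t ∈ s.erase j, ε t * f (g t) := by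
        have := hsum
        linarith

lemma abs_sum_bound {n : ℕ} (hn : 2 ≤ n) (s : Finset ℕ) (hcard : s.card ≤ n)
    (g : ℕ → ℕ) (ε : ℕ → ℚ) (hε : ∀ t ∈ s, ε t = 1 ∨ ε t = -1) :
    |∑ t ∈ s, ε t * (((n : ℚ) - 1) / (n : ℚ) ^ (g t + 2))| ≤ ((n : ℚ) - 1) / (n : ℚ) := by
  have h2q : (2 : ℚ) ≤ (n : ℚ) := by exact_mod_cast hn
  have hn0 : (0 : ℚ) < (n : ℚ) := by linarith
  have hn1 : (1 : ℚ) ≤ (n : ℚ) := by linarith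
  have hnum : (0 : ℚ) ≤ (n : ℚ) - 1 := by linarith
  calc |∑ t ∈ s, ε t * (((n : ℚ) - 1) / (n : ℚ) ^ (g t + 2))|
      ≤ ∑ t ∈ s, |ε t * (((n : ℚ) - 1) / (n : ℚ) ^ (g t + 2))| :=
        Finset.abs_sum_le_sum_abs _ _
    _ ≤ ∑ _t ∈ s, ((n : ℚ) - 1) / (n : ℚ) ^ 2 := by
        apply Finset.sum_le_sum
        intro t ht
        rw [abs_mul]
        have hεabs : |ε t| = 1 := by rcases hε t ht with h | h <;> rw [h] <;> norm_num
        rw [hεabs, one_mul, abs_of_nonneg (div_nonneg hnum (by positivity))]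
        exact div_le_div_of_nonneg_left hnum (by positivity)
          (pow_le_pow_right₀ hn1 (by omega))
    _ = s.card * (((n : ℚ) - 1) / (n : ℚ) ^ 2) := by
        rw [Finset.sum_const, nsmul_eq_mul]
    _ ≤ (n : ℚ) * (((n : ℚ) - 1) / (n : ℚ) ^ 2) := by
        apply mul_le_mul_of_nonneg_right _ (div_nonneg hnum (by positivity))
        exact_mod_cast hcard
    _ = ((n : ℚ) - 1) / (n : ℚ) := by
        have hne : (n : ℚ) ≠ 0 := ne_of_gt hn0
        field_simp

lemma Dpos {n : ℕ} (hn : 2 ≤ n) (s : Finset ℕ) (hcard : s.card ≤ n) (g : ℕ → ℕ)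
    {j : ℕ} (hj : j ∈ s) (hev : Even (g j)) (hmin : ∀ t ∈ s, g j ≤ g t) :
    0 < ∑ t ∈ s, (-1 : ℚ) ^ (g t) * (((n : ℚ) - 1) / (n : ℚ) ^ (g t + 2)) := by
  have h2q : (2 : ℚ) ≤ (n : ℚ) := by exact_mod_cast hn
  have h := core_arith hn s hcard g (fun t => (-1 : ℚ) ^ (g t))
    (fun t _ => by
      rcases Nat.even_or_odd (g t) with he | ho
      · exact Or.inl he.neg_one_pow
      · exact Or.inr ho.neg_one_pow)
    hj hev.neg_one_pow hmin
    (fun t _ hgt => by rw [hgt]; exact hev.neg_one_pow)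
  have hpos : 0 < ((n : ℚ) - 1) / (n : ℚ) ^ (g j + 3) := by
    apply div_pos <;> [linarith; positivity]
  linarith

lemma Dneg {n : ℕ} (hn : 2 ≤ n) (s : Finset ℕ) (hcard : s.card ≤ n) (g : ℕ → ℕ)
    {j : ℕ} (hj : j ∈ s) (hodd : Odd (g j)) (hmin : ∀ t ∈ s, g j ≤ g t) :
    ∑ t ∈ s, (-1 : ℚ) ^ (g t) * (((n : ℚ) - 1) / (n : ℚ) ^ (g t + 2)) < 0 := by
  have h2q : (2 : ℚ) ≤ (n : ℚ) := by exact_mod_cast hn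
  have h := core_arith hn s hcard g (fun t => (-1 : ℚ) ^ (g t + 1))
    (fun t _ => by
      rcases Nat.even_or_odd (g t + 1) with he | ho
      · exact Or.inl he.neg_one_pow
      · exact Or.inr ho.neg_one_pow)
    hj hodd.add_one.neg_one_pow hmin
    (fun t _ hgt => by rw [hgt]; exact hodd.add_one.neg_one_pow)
  have hrw : ∑ t ∈ s, (-1 : ℚ) ^ (g t) * (((n : ℚ) - 1) / (n : ℚ) ^ (g t + 2))
      = -∑ t ∈ s, (-1 : ℚ) ^ (g t + 1) * (((n : ℚ) - 1) / (n : ℚ) ^ (g t + 2)) := by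
    rw [← Finset.sum_neg_distrib]
    apply Finset.sum_congr rfl
    intro t _
    rw [pow_succ]
    ring
  have hpos : 0 < ((n : ℚ) - 1) / (n : ℚ) ^ (g j + 3) := by
    apply div_pos <;> [linarith; positivity]
  rw [hrw]
  linarith

lemma cycle_split (p : Q → ℕ) (w : Q → Q → ℤ) {n : ℕ} (hn : 2 ≤ n)
    (w' : Q → Q → ℚ) (hw' : ∀ q q', w' q q' = (w q q' : ℚ) + (-1 : ℚ) ^ (p q) *
      (1 / (n : ℚ) ^ (p q + 1) - 1 / (n : ℚ) ^ (p q + 2)))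
    (ρ : ℕ → Q) (i k : ℕ) :
    ∑ j ∈ Finset.Ico i (i + k), w' (ρ j) (ρ (j + 1))
      = ((∑ j ∈ Finset.Ico i (i + k), w (ρ j) (ρ (j + 1)) : ℤ) : ℚ)
        + ∑ j ∈ Finset.Ico i (i + k), (-1 : ℚ) ^ (p (ρ j)) *
            (((n : ℚ) - 1) / (n : ℚ) ^ (p (ρ j) + 2)) := by
  have hn0 : (0 : ℚ) < (n : ℚ) := by
    have : 0 < n := by omega
    exact_mod_cast this
  have hne : (n : ℚ) ≠ 0 := ne_of_gt hn0
  push_cast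
  rw [← Finset.sum_add_distrib]
  apply Finset.sum_congr rfl
  intro t _
  rw [hw']
  congr 1
  congr 1
  rw [div_sub_div _ _ (by positivity) (by positivity)]
  rw [pow_succ ((n : ℚ)) (p (ρ t) + 1)]
  field_simp

lemma fwd_cycle (p : Q → ℕ) (w : Q → Q → ℤ) {n : ℕ} (hn : 2 ≤ n)
    (w' : Q → Q → ℚ) (hw' : ∀ q q', w' q q' = (w q q' : ℚ) + (-1 : ℚ) ^ (p q) *
      (1 / (n : ℚ) ^ (p q + 1) - 1 / (n : ℚ) ^ (p q + 2)))
    (ρ : ℕ → Q) {i k : ℕ} (hk : 0 < k) (hkn : k ≤ n) (hcyc : ρ i = ρ (i + k))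
    (hdisj : 0 < ∑ j ∈ Finset.Ico i (i + k), w (ρ j) (ρ (j + 1)) ∨
      (∑ j ∈ Finset.Ico i (i + k), w (ρ j) (ρ (j + 1)) = 0 ∧ MinPrioEven p ρ i k)) :
    0 < ∑ j ∈ Finset.Ico i (i + k), w' (ρ j) (ρ (j + 1)) := by
  have h2q : (2 : ℚ) ≤ (n : ℚ) := by exact_mod_cast hn
  rw [cycle_split p w hn w' hw' ρ i k]
  have hcard : (Finset.Ico i (i + k)).card ≤ n := by rw [Nat.card_Ico]; omega
  rcases hdisj with hpos | ⟨hzero, j, hjmem, hjev, hjmin⟩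
  · have h1 : (1 : ℚ) ≤ ((∑ j ∈ Finset.Ico i (i + k), w (ρ j) (ρ (j + 1)) : ℤ) : ℚ) := by
      exact_mod_cast hpos
    have habs := abs_sum_bound hn (Finset.Ico i (i + k)) hcard (fun t => p (ρ t))
      (fun t => (-1 : ℚ) ^ (p (ρ t))) (fun t _ => by
        rcases Nat.even_or_odd (p (ρ t)) with he | ho
        · exact Or.inl he.neg_one_pow
        · exact Or.inr ho.neg_one_pow)
    have hlt1 : ((n : ℚ) - 1) / (n : ℚ) < 1 := by
      rw [div_lt_one (by linarith)]
      linarith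
    have := (abs_le.mp habs).1
    linarith
  · rw [hzero]
    simp only [Int.cast_zero, zero_add]
    have hj1 := Finset.mem_Icc.mp hjmem
    set j' := if j = i + k then i else j with hj'def
    have hpj : p (ρ j') = p (ρ j) := by
      rw [hj'def]
      split_ifs with hij
      · rw [hij, ← hcyc]
      · rfl
    have hmem : j' ∈ Finset.Ico i (i + k) := by
      rw [hj'def]
      split_ifs with hij
      · simp; omega
      · rw [Finset.mem_Ico]; omega
    exact Dpos hn (Finset.Ico i (i + k)) hcard (fun t => p (ρ t)) hmem
      (by rw [hpj]; exact hjev)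
      (fun t ht => by
        rw [hpj]
        exact hjmin t (Finset.mem_Icc.mpr (by
          have := Finset.mem_Ico.mp ht; omega)))

lemma bwd_cycle (p : Q → ℕ) (w : Q → Q → ℤ) {n : ℕ} (hn : 2 ≤ n)
    (w' : Q → Q → ℚ) (hw' : ∀ q q', w' q q' = (w q q' : ℚ) + (-1 : ℚ) ^ (p q) *
      (1 / (n : ℚ) ^ (p q + 1) - 1 / (n : ℚ) ^ (p q + 2)))
    (ρ : ℕ → Q) {i k : ℕ} (hk : 0 < k) (hkn : k ≤ n) (hcyc : ρ i = ρ (i + k))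
    (hS : 0 ≤ ∑ j ∈ Finset.Ico i (i + k), w' (ρ j) (ρ (j + 1))) :
    0 < ∑ j ∈ Finset.Ico i (i + k), w (ρ j) (ρ (j + 1)) ∨
      (∑ j ∈ Finset.Ico i (i + k), w (ρ j) (ρ (j + 1)) = 0 ∧ MinPrioEven p ρ i k) := by
  have h2q : (2 : ℚ) ≤ (n : ℚ) := by exact_mod_cast hn
  rw [cycle_split p w hn w' hw' ρ i k] at hS
  have hcard : (Finset.Ico i (i + k)).card ≤ n := by rw [Nat.card_Ico]; omega
  have habs := abs_sum_bound hn (Finset.Ico i (i + k)) hcard (fun t => p (ρ t))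
    (fun t => (-1 : ℚ) ^ (p (ρ t))) (fun t _ => by
      rcases Nat.even_or_odd (p (ρ t)) with he | ho
      · exact Or.inl he.neg_one_pow
      · exact Or.inr ho.neg_one_pow)
  have hlt1 : ((n : ℚ) - 1) / (n : ℚ) < 1 := by
    rw [div_lt_one (by linarith)]
    linarith
  have hWge : 0 ≤ ∑ j ∈ Finset.Ico i (i + k), w (ρ j) (ρ (j + 1)) := by
    by_contra hcon
    push_neg at hcon
    have h1 : ∑ j ∈ Finset.Ico i (i + k), w (ρ j) (ρ (j + 1)) ≤ -1 := by omega
    have h2 : ((∑ j ∈ Finset.Ico i (i + k), w (ρ j) (ρ (j + 1)) : ℤ) : ℚ) ≤ -1 := by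
      exact_mod_cast h1
    have := (abs_le.mp habs).2
    linarith
  rcases lt_or_eq_of_le hWge with hpos | hzero
  · exact Or.inl hpos
  · right
    refine ⟨hzero.symm, ?_⟩
    have hD0 : 0 ≤ ∑ j ∈ Finset.Ico i (i + k), (-1 : ℚ) ^ (p (ρ j)) *
        (((n : ℚ) - 1) / (n : ℚ) ^ (p (ρ j) + 2)) := by
      rw [← hzero] at hS
      simp only [Int.cast_zero, zero_add] at hS
      exact hS
    obtain ⟨j, hjmem, hjmin⟩ := Finset.exists_min_image (Finset.Ico i (i + k))
      (fun t => p (ρ t)) ⟨i, Finset.mem_Ico.mpr ⟨le_refl i, by omega⟩⟩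
    have hj1 := Finset.mem_Ico.mp hjmem
    rcases Nat.even_or_odd (p (ρ j)) with hev | hodd
    · refine ⟨j, Finset.mem_Icc.mpr (by omega), hev, ?_⟩
      intro l hl
      have hl1 := Finset.mem_Icc.mp hl
      rcases lt_or_eq_of_le hl1.2 with hlt | heq
      · exact hjmin l (Finset.mem_Ico.mpr ⟨hl1.1, hlt⟩)
      · rw [heq, ← hcyc]
        exact hjmin i (Finset.mem_Ico.mpr ⟨le_refl i, by omega⟩)
    · exfalso
      have := Dneg hn (Finset.Ico i (i + k)) hcard (fun t => p (ρ t)) hjmem hodd hjmin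
      linarith

lemma exists_repeat [Fintype Q] {n : ℕ} (hn : Fintype.card Q = n) (ρ : ℕ → Q) (i : ℕ) :
    ∃ a b, i ≤ a ∧ a < b ∧ b ≤ i + n ∧ ρ a = ρ b := by
  have hcard : (Finset.univ : Finset Q).card < (Finset.Icc i (i + n)).card := by
    rw [Nat.card_Icc, Finset.card_univ, hn]
    omega
  obtain ⟨a, ha, b, hb, hab, heq⟩ := Finset.exists_ne_map_eq_of_card_lt_of_maps_to hcard
    (fun x _ => Finset.mem_univ (ρ x))
  have ham := Finset.mem_Icc.mp ha
  have hbm := Finset.mem_Icc.mp hb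
  rcases Nat.lt_or_ge a b with h | h
  · exact ⟨a, b, ham.1, h, hbm.2, heq⟩
  · exact ⟨b, a, hbm.1, by omega, ham.2, heq.symm⟩

lemma skipAt_sum_Ico {M : Type*} [AddCommGroup M] (v : Q → Q → M) (ρ : ℕ → Q)
    {a d : ℕ} (h : ρ a = ρ (a + d)) {i k' : ℕ} (hia : i ≤ a) (hak : a ≤ i + k') :
    ∑ j ∈ Finset.Ico i (i + k'), v (skipAt ρ a d j) (skipAt ρ a d (j + 1))
      = ∑ j ∈ Finset.Ico i (i + k' + d), v (ρ j) (ρ (j + 1))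
        - ∑ j ∈ Finset.Ico a (a + d), v (ρ j) (ρ (j + 1)) := by
  have h1 := skipAt_sum v ρ h hak
  have hlow : ∑ j ∈ Finset.range i, v (skipAt ρ a d j) (skipAt ρ a d (j + 1))
      = ∑ j ∈ Finset.range i, v (ρ j) (ρ (j + 1)) := by
    apply Finset.sum_congr rfl
    intro j hj
    have := Finset.mem_range.mp hj
    rw [skipAt_le ρ h (by omega), skipAt_le ρ h (by omega)]
  have split1 := Finset.sum_Ico_consecutive
    (fun j => v (skipAt ρ a d j) (skipAt ρ a d (j + 1)))
    (Nat.zero_le i) (by omega : i ≤ i + k')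
  have split2 := Finset.sum_Ico_consecutive (fun j => v (ρ j) (ρ (j + 1)))
    (Nat.zero_le i) (by omega : i ≤ i + k' + d)
  simp only [← Finset.range_eq_Ico] at split1 split2
  have h2 : i + k' + d = (i + k') + d := by omega
  rw [← split1, hlow] at h1
  rw [h2, ← split2] at h1
  have h4 : ∀ X A B : M, X + A = B → A = B - X := by
    intro X A B hXAB
    rw [← hXAB]
    abel
  exact (h4 _ _ _ h1).trans (by abel)

lemma minprio_combine (p : Q → ℕ) (ρ : ℕ → Q) {i k a d : ℕ}
    (hia : i ≤ a) (hd : 0 < d) (hbk : a + d ≤ i + k) (hdk : d ≤ k)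
    (hcyc : ρ a = ρ (a + d))
    (h1 : MinPrioEven p ρ a d)
    (h2 : MinPrioEven p (skipAt ρ a d) i (k - d)) :
    MinPrioEven p ρ i k := by
  obtain ⟨j₁, hj₁mem, hj₁ev, hj₁min⟩ := h1
  obtain ⟨j₂, hj₂mem, hj₂ev, hj₂min⟩ := h2
  have hj₁m := Finset.mem_Icc.mp hj₁mem
  have hj₂m := Finset.mem_Icc.mp hj₂mem
  have hcover : ∀ l ∈ Finset.Icc i (i + k),
      min (p (ρ j₁)) (p (skipAt ρ a d j₂)) ≤ p (ρ l) := by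
    intro l hl
    have hlm := Finset.mem_Icc.mp hl
    rcases le_or_gt l a with hla | hla
    · have h3 := hj₂min l (Finset.mem_Icc.mpr ⟨hlm.1, by omega⟩)
      rw [skipAt_le ρ hcyc hla] at h3
      exact le_trans (min_le_right _ _) h3
    · rcases le_or_gt l (a + d) with hlb | hlb
      · exact le_trans (min_le_left _ _)
          (hj₁min l (Finset.mem_Icc.mpr ⟨by omega, by omega⟩))
      · have h3 := hj₂min (l - d) (Finset.mem_Icc.mpr ⟨by omega, by omega⟩)
        rw [skipAt_ge ρ (by omega : a ≤ l - d)] at h3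
        rw [show l - d + d = l by omega] at h3
        exact le_trans (min_le_right _ _) h3
  rcases le_total (p (ρ j₁)) (p (skipAt ρ a d j₂)) with hcmp | hcmp
  · refine ⟨j₁, Finset.mem_Icc.mpr ⟨by omega, by omega⟩, hj₁ev, ?_⟩
    intro l hl
    have h3 := hcover l hl
    rw [min_eq_left hcmp] at h3
    exact h3
  · obtain ⟨j₂', hmem', hval⟩ : ∃ j₂', j₂' ∈ Finset.Icc i (i + k) ∧
        ρ j₂' = skipAt ρ a d j₂ := by
      rcases le_or_gt j₂ a with hja | hja
      · exact ⟨j₂, Finset.mem_Icc.mpr ⟨hj₂m.1, by omega⟩,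
          (skipAt_le ρ hcyc hja).symm⟩
      · refine ⟨j₂ + d, Finset.mem_Icc.mpr ⟨by omega, by omega⟩, ?_⟩
        rw [skipAt_ge ρ (by omega : a ≤ j₂)]
    refine ⟨j₂', hmem', by rw [hval]; exact hj₂ev, ?_⟩
    intro l hl
    have h3 := hcover l hl
    rw [min_eq_right hcmp] at h3
    rw [hval]
    exact h3

lemma fwd_bound [Fintype Q] (Q1 : Set Q) (E : Q → Q → Prop) (p : Q → ℕ)
    (w : Q → Q → ℤ) {n : ℕ} (hncard : Fintype.card Q = n) (hn : 2 ≤ n)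
    (w' : Q → Q → ℚ) (hw' : ∀ q q', w' q q' = (w q q' : ℚ) + (-1 : ℚ) ^ (p q) *
      (1 / (n : ℚ) ^ (p q + 1) - 1 / (n : ℚ) ^ (p q + 2)))
    (σ : Q → Q) (q : Q) (hGFE : GoodForEnergy Q1 E p w σ q)
    (W : ℚ) (hW : ∀ a b : Q, |w' a b| ≤ W) (hW0 : 0 ≤ W) :
    ∀ m ρ, MemlessOutcome Q1 E σ q ρ →
      -((n : ℚ) * W) ≤ ∑ j ∈ Finset.range m, w' (ρ j) (ρ (j + 1)) := by
  intro m
  induction m using Nat.strong_induction_on with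
  | _ m ih =>
    intro ρ hρ
    rcases le_or_gt m n with hmn | hmn
    · have hterm : ∀ j ∈ Finset.range m, -W ≤ w' (ρ j) (ρ (j + 1)) :=
        fun j _ => (abs_le.mp (hW _ _)).1
      have hsum := Finset.sum_le_sum hterm
      rw [Finset.sum_const, Finset.card_range, nsmul_eq_mul] at hsum
      have hmcast : (m : ℚ) ≤ (n : ℚ) := by exact_mod_cast hmn
      have : -((n : ℚ) * W) ≤ (m : ℚ) * (-W) := by nlinarith
      linarith
    · obtain ⟨a, b, _, hab, hbn, heq⟩ := exists_repeat hncard ρ 0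
      rw [Nat.zero_add] at hbn
      set d := b - a with hddef
      have hd : 0 < d := by omega
      have hdn : d ≤ n := by omega
      have heq' : ρ a = ρ (a + d) := by rw [show a + d = b by omega]; exact heq
      have hcyc := hGFE ρ hρ a d hd heq'
      have hcycpos := fwd_cycle p w hn w' hw' ρ hd hdn heq' hcyc
      have hρ' := skipAt_outcome hρ heq'
      have hm' : a ≤ m - d := by omega
      have hsum := skipAt_sum w' ρ heq' hm'
      rw [show m - d + d = m by omega] at hsum
      have hih := ih (m - d) (by omega) (skipAt ρ a d) hρ'
      rw [hsum] at hih
      linarith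

lemma bwd_main [Fintype Q] (Q1 : Set Q) (E : Q → Q → Prop) (p : Q → ℕ)
    (w : Q → Q → ℤ) {n : ℕ} (hncard : Fintype.card Q = n) (hn : 2 ≤ n)
    (w' : Q → Q → ℚ) (hw' : ∀ q q', w' q q' = (w q q' : ℚ) + (-1 : ℚ) ^ (p q) *
      (1 / (n : ℚ) ^ (p q + 1) - 1 / (n : ℚ) ^ (p q + 2)))
    (σ : Q → Q) (q : Q) (c₀ : ℚ)
    (hEn : ∀ ρ, MemlessOutcome Q1 E σ q ρ →
      ∀ m, 0 ≤ c₀ + ∑ j ∈ Finset.range m, w' (ρ j) (ρ (j + 1))) :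
    ∀ k ρ, MemlessOutcome Q1 E σ q ρ → ∀ i, 0 < k → ρ i = ρ (i + k) →
      0 < ∑ j ∈ Finset.Ico i (i + k), w (ρ j) (ρ (j + 1)) ∨
        (∑ j ∈ Finset.Ico i (i + k), w (ρ j) (ρ (j + 1)) = 0 ∧ MinPrioEven p ρ i k) := by
  intro k
  induction k using Nat.strong_induction_on with
  | _ k ih =>
    intro ρ hρ i hk hcyc
    rcases le_or_gt k n with hkn | hkn
    · -- small cycle: loop forever
      have hS : 0 ≤ ∑ j ∈ Finset.Ico i (i + k), w' (ρ j) (ρ (j + 1)) := by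
        by_contra hcon
        push_neg at hcon
        set S := ∑ j ∈ Finset.Ico i (i + k), w' (ρ j) (ρ (j + 1)) with hSdef
        set A := ∑ j ∈ Finset.range i, w' (ρ j) (ρ (j + 1)) with hAdef
        obtain ⟨t, ht⟩ := exists_nat_gt ((c₀ + A) / (-S))
        have hloop := hEn (loopAt ρ i k) (loopAt_outcome hρ hk hcyc) (i + t * k)
        rw [loopAt_sum w' ρ hk hcyc t] at hloop
        rw [div_lt_iff₀ (by linarith : (0 : ℚ) < -S)] at ht
        rw [nsmul_eq_mul] at hloop
        nlinarith
      exact bwd_cycle p w hn w' hw' ρ hk hkn hcyc hS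
    · -- long cycle: split off an inner cycle
      obtain ⟨a, b, hia, hab, hbn, heq⟩ := exists_repeat hncard ρ i
      set d := b - a with hddef
      have hd0 : 0 < d := by omega
      have hdn : d ≤ n := by omega
      have heq' : ρ a = ρ (a + d) := by rw [show a + d = b by omega]; exact heq
      have hinner := ih d (by omega) ρ hρ a hd0 heq'
      have hρ' := skipAt_outcome hρ heq'
      set k' := k - d with hk'def
      have hk'0 : 0 < k' := by omega
      have hak : a ≤ i + k' := by omega
      have houter_cyc : skipAt ρ a d i = skipAt ρ a d (i + k') := by
        rw [skipAt_le ρ heq' hia, skipAt_ge ρ hak]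
        rw [show i + k' + d = i + k by omega]
        exact hcyc
      have houter := ih k' (by omega) (skipAt ρ a d) hρ' i hk'0 houter_cyc
      have hsplit := skipAt_sum_Ico w ρ heq' hia hak
      rw [show i + k' + d = i + k by omega] at hsplit
      set Wtot := ∑ j ∈ Finset.Ico i (i + k), w (ρ j) (ρ (j + 1)) with hWtot
      set Win := ∑ j ∈ Finset.Ico a (a + d), w (ρ j) (ρ (j + 1)) with hWin
      set Wout := ∑ j ∈ Finset.Ico i (i + k'),
        w (skipAt ρ a d j) (skipAt ρ a d (j + 1)) with hWout
      have hin0 : 0 ≤ Win := by rcases hinner with h | h; omega; omega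
      have hout0 : 0 ≤ Wout := by rcases houter with h | h; omega; omega
      rcases lt_or_eq_of_le hin0 with hinpos | hinzero
      · left; omega
      · rcases lt_or_eq_of_le hout0 with houtpos | houtzero
        · left; omega
        · right
          have hWtot0 : Wtot = 0 := by omega
          refine ⟨hWtot0, ?_⟩
          have hmin1 : MinPrioEven p ρ a d := by
            rcases hinner with h | h
            · omega
            · exact h.2
          have hmin2 : MinPrioEven p (skipAt ρ a d) i k' := by
            rcases houter with h | h
            · omega
            · exact h.2
          exact minprio_combine p ρ hia hd0 (by omega) (by omega) heq' hmin1 hmin2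

end Stmt13Aux

set_option maxHeartbeats 1000000 in
/-- with `w' q q' = w q q' + Δ(q)`, player 1 has a memoryless strategy
good-for-energy in `q` in the energy parity game `⟨G,p,w⟩` iff player 1 has a memoryless
strategy winning the energy game `⟨G,w'⟩` from `q` with some finite initial credit. -/
theorem stmt13 {Q : Type*} [Fintype Q] (Q1 : Set Q) (E : Q → Q → Prop)
    (hE : ∀ q, ∃ q', E q q') (p : Q → ℕ) (w : Q → Q → ℤ)
    (n : ℕ) (hn : Fintype.card Q = n) (h2 : 2 ≤ n)
    (w' : Q → Q → ℚ)
    (hw' : ∀ q q', w' q q' = (w q q' : ℚ) + (-1 : ℚ) ^ (p q) *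
      (1 / (n : ℚ) ^ (p q + 1) - 1 / (n : ℚ) ^ (p q + 2)))
    (q : Q) :
    (∃ σ : Q → Q, (∀ s ∈ Q1, E s (σ s)) ∧ GoodForEnergy Q1 E p w σ q) ↔
      (∃ σ : Q → Q, (∀ s ∈ Q1, E s (σ s)) ∧ ∃ c₀ : ℚ, 0 ≤ c₀ ∧
        ∀ ρ, MemlessOutcome Q1 E σ q ρ →
          ∀ m, 0 ≤ c₀ + ∑ j ∈ Finset.range m, w' (ρ j) (ρ (j + 1))) := by
  constructor
  · rintro ⟨σ, hσE, hGFE⟩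
    refine ⟨σ, hσE, ?_⟩
    have hQne : Nonempty Q := by
      have hcpos : 0 < Fintype.card Q := by omega
      exact Fintype.card_pos_iff.mp hcpos
    obtain ⟨W, hW⟩ : ∃ W : ℚ, ∀ a b : Q, |w' a b| ≤ W := by
      classical
      obtain ⟨x, -, hx⟩ := Finset.exists_max_image
        ((Finset.univ : Finset Q) ×ˢ (Finset.univ : Finset Q))
        (fun x : Q × Q => |w' x.1 x.2|)
        ⟨(Classical.arbitrary Q, Classical.arbitrary Q), by simp⟩
      exact ⟨|w' x.1 x.2|, fun a b => hx (a, b) (by simp)⟩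
    have hW0 : 0 ≤ W :=
      le_trans (abs_nonneg _) (hW (Classical.arbitrary Q) (Classical.arbitrary Q))
    refine ⟨(n : ℚ) * W, mul_nonneg (by positivity) hW0, ?_⟩
    intro ρ hρ m
    have := Stmt13Aux.fwd_bound Q1 E p w hn h2 w' hw' σ q hGFE W hW hW0 m ρ hρ
    linarith
  · rintro ⟨σ, hσE, c₀, hc₀, hEn⟩
    refine ⟨σ, hσE, ?_⟩
    intro ρ hρ i k hk hcyc
    exact Stmt13Aux.bwd_main Q1 E p w hn h2 w' hw' σ q c₀ hEn k ρ hρ i hk hcyc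
end

section
/- Let ⟨G,p,w⟩ be a game graph with priority function p and integer weight function w, let ε = 1/(|Q|+1), and let w⁺(e) = (|Q|+1)·w(e) + 1. Let σ be a player-1 strategy with finite memory of size m such that every cycle C in the product graph G_σ that is reachable from the initial state ⟨m₀,q₀⟩ has even minimal priority and satisfies Σ_{e∈C} w(e) ≥ −ε·|C| (equivalently, Σ_{e∈C} w⁺(e) ≥ 0, where edge weights of G_σ are those of the projected edges of G). Then σ is winning from q₀ in the energy parity game ⟨G,p,w⁺⟩ with initial credit N·W⁺, where N = m·|Q| and W⁺ is the largest absolute value of a weight of w⁺: every outcome of σ from q₀ satisfies the parity condition and the energy condition with respect to w⁺ with this initial credit. -/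
variable {Q : Type*}

/-- Memory state of the transducer after reading `ρ 0, …, ρ (i-1)`. -/
def MemRun {M : Type*} (αu : M → Q → M) (m₀ : M) (ρ : ℕ → Q) : ℕ → M
  | 0 => m₀
  | i + 1 => αu (MemRun αu m₀ ρ i) (ρ i)

/-- An outcome of the finite-memory strategy given by the transducer `⟨M, m₀, αu, αn⟩`. -/
def TransOutcome {M : Type*} (Q1 : Set Q) (E : Q → Q → Prop)
    (αu : M → Q → M) (αn : M → Q → Q) (m₀ : M) (q₀ : Q) (ρ : ℕ → Q) : Prop :=
  ρ 0 = q₀ ∧ IsPlay E ρ ∧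
    ∀ i, ρ i ∈ Q1 → ρ (i + 1) = αn (MemRun αu m₀ ρ i) (ρ i)

/-- The product graph `G_σ` of the game with the transducer `⟨M, m₀, αu, αn⟩`. -/
def EProd {M : Type*} (Q1 : Set Q) (E : Q → Q → Prop)
    (αu : M → Q → M) (αn : M → Q → Q) : M × Q → M × Q → Prop :=
  fun x y => y.1 = αu x.1 x.2 ∧
    ((x.2 ∈ Q1 ∧ y.2 = αn x.1 x.2) ∨ (x.2 ∉ Q1 ∧ E x.2 y.2))

section Aux

variable {Q : Type*} {M : Type*}

lemma sigma_step (Q1 : Set Q) (E : Q → Q → Prop) (αu : M → Q → M) (αn : M → Q → Q)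
    (m₀ : M) (q₀ : Q) (ρ : ℕ → Q) (h : TransOutcome Q1 E αu αn m₀ q₀ ρ) (i : ℕ) :
    EProd Q1 E αu αn (MemRun αu m₀ ρ i, ρ i) (MemRun αu m₀ ρ (i + 1), ρ (i + 1)) := by
  obtain ⟨h0, hplay, hstrat⟩ := h
  refine ⟨rfl, ?_⟩
  by_cases hq : ρ i ∈ Q1
  · exact Or.inl ⟨hq, hstrat i hq⟩
  · exact Or.inr ⟨hq, hplay i⟩

lemma sigma_reach (Q1 : Set Q) (E : Q → Q → Prop) (αu : M → Q → M) (αn : M → Q → Q)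
    (m₀ : M) (q₀ : Q) (ρ : ℕ → Q) (h : TransOutcome Q1 E αu αn m₀ q₀ ρ) (i : ℕ) :
    Relation.ReflTransGen (EProd Q1 E αu αn) (m₀, q₀) (MemRun αu m₀ ρ i, ρ i) := by
  induction i with
  | zero =>
    have : (MemRun αu m₀ ρ 0, ρ 0) = (m₀, q₀) := by
      rw [h.1]; rfl
    rw [this]
  | succ i ih => exact ih.tail (sigma_step Q1 E αu αn m₀ q₀ ρ h i)

/-- Surgery: cutting out a cycle from an outcome yields an outcome, with energy levels
related by the cycle sum. -/
lemma surgery (Q1 : Set Q) (E : Q → Q → Prop) (αu : M → Q → M) (αn : M → Q → Q)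
    (m₀ : M) (q₀ : Q) (ρ : ℕ → Q) (h : TransOutcome Q1 E αu αn m₀ q₀ ρ)
    (wplus : Q → Q → ℤ) {i j : ℕ} (hij : i < j)
    (heqm : MemRun αu m₀ ρ i = MemRun αu m₀ ρ j) (heqq : ρ i = ρ j) :
    TransOutcome Q1 E αu αn m₀ q₀ (fun k => ρ (if k < i then k else k + (j - i))) ∧
    ∀ n, j ≤ n →
      EL wplus (fun k => ρ (if k < i then k else k + (j - i))) (n - (j - i)) =
        EL wplus ρ n - ∑ t ∈ Finset.Ico i j, wplus (ρ t) (ρ (t + 1)) := by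
  obtain ⟨h0, hplay, hstrat⟩ := h
  set g : ℕ → ℕ := fun k => if k < i then k else k + (j - i) with hg
  have hg1 : ∀ k, g (k + 1) = g k + 1 ∨ (g (k + 1) = j ∧ g k + 1 = i) := by
    intro k
    by_cases h1 : k + 1 < i
    · left; simp only [hg]
      rw [if_pos h1, if_pos (by omega)]
    · by_cases h2 : k + 1 = i
      · right; simp only [hg]
        rw [if_neg h1, if_pos (by omega)]
        omega
      · left; simp only [hg]
        rw [if_neg h1, if_neg (by omega)]
        omega
  have hρstep : ∀ k, ρ (g (k + 1)) = ρ (g k + 1) := by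
    intro k
    rcases hg1 k with h' | ⟨h1, h2⟩
    · rw [h']
    · rw [h1, h2, heqq]
  have hmstep : ∀ k, MemRun αu m₀ ρ (g (k + 1)) = MemRun αu m₀ ρ (g k + 1) := by
    intro k
    rcases hg1 k with h' | ⟨h1, h2⟩
    · rw [h']
    · rw [h1, h2, heqm]
  have hM : ∀ k, MemRun αu m₀ (fun k => ρ (g k)) k = MemRun αu m₀ ρ (g k) := by
    intro k
    induction k with
    | zero =>
      by_cases h0i : 0 < i
      · have : g 0 = 0 := by simp only [hg]; rw [if_pos h0i]
        rw [this]; rfl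
      · have hi0 : i = 0 := by omega
        have : g 0 = j := by simp only [hg]; rw [if_neg (by omega)]; omega
        rw [this, ← heqm, hi0]; rfl
    | succ k ih =>
      show αu (MemRun αu m₀ (fun k => ρ (g k)) k) (ρ (g k)) = _
      rw [ih, hmstep k]; rfl
  constructor
  · refine ⟨?_, ?_, ?_⟩
    · show ρ (g 0) = q₀
      by_cases h0i : 0 < i
      · have : g 0 = 0 := by simp only [hg]; rw [if_pos h0i]
        rw [this, h0]
      · have hi0 : i = 0 := by omega
        have : g 0 = j := by simp only [hg]; rw [if_neg (by omega)]; omega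
        rw [this, ← heqq, hi0, h0]
    · intro k
      show E (ρ (g k)) (ρ (g (k + 1)))
      rw [hρstep k]
      exact hplay (g k)
    · intro k hk
      show ρ (g (k + 1)) = αn (MemRun αu m₀ (fun k => ρ (g k)) k) (ρ (g k))
      rw [hρstep k, hM k]
      exact hstrat (g k) hk
  · intro n hn
    have himg : (Finset.range (n - (j - i))).image g =
        Finset.range n \ Finset.Ico i j := by
      ext t
      simp only [Finset.mem_image, Finset.mem_range, Finset.mem_sdiff, Finset.mem_Ico]
      constructor
      · rintro ⟨k, hk, rfl⟩
        simp only [hg]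
        split_ifs <;> omega
      · rintro ⟨h1, h2⟩
        by_cases hti : t < i
        · exact ⟨t, by omega, by simp only [hg]; rw [if_pos hti]⟩
        · refine ⟨t - (j - i), by omega, ?_⟩
          simp only [hg]
          rw [if_neg (by omega)]
          omega
    have hginj : Set.InjOn g (Finset.range (n - (j - i))) := by
      intro a _ b _ hab
      simp only [hg] at hab
      split_ifs at hab <;> omega
    calc EL wplus (fun k => ρ (g k)) (n - (j - i))
        = ∑ k ∈ Finset.range (n - (j - i)), wplus (ρ (g k)) (ρ (g k + 1)) := by
          unfold EL
          refine Finset.sum_congr rfl fun k _ => ?_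
          rw [← hρstep k]
      _ = ∑ t ∈ (Finset.range (n - (j - i))).image g, wplus (ρ t) (ρ (t + 1)) := by
          rw [Finset.sum_image (fun a ha b hb => hginj ha hb)]
      _ = ∑ t ∈ Finset.range n \ Finset.Ico i j, wplus (ρ t) (ρ (t + 1)) := by rw [himg]
      _ = EL wplus ρ n - ∑ t ∈ Finset.Ico i j, wplus (ρ t) (ρ (t + 1)) := by
          unfold EL
          rw [eq_sub_iff_add_eq, Finset.sum_sdiff]
          intro t ht
          simp only [Finset.mem_Ico] at ht
          simp only [Finset.mem_range]
          omega

end Aux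

/-- with `w⁺(e) = (|Q|+1)·w(e) + 1`, if `σ` is a finite-memory strategy of
size `m` such that every cycle of the product graph `G_σ` reachable from `⟨m₀,q₀⟩` has
even minimal priority and nonnegative sum of `w⁺`-weights, then `σ` is winning from `q₀`
in the energy parity game `⟨G,p,w⁺⟩` with initial credit `N·W⁺` where `N = m·|Q|` and
`W⁺` is the largest absolute value of a `w⁺`-weight. -/
theorem stmt15 {Q : Type*} [Fintype Q] (Q1 : Set Q) (E : Q → Q → Prop)
    (hE : ∀ q, ∃ q', E q q') (p : Q → ℕ) (w : Q → Q → ℤ)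
    (wplus : Q → Q → ℤ)
    (hwp : ∀ q q', wplus q q' = ((Fintype.card Q : ℤ) + 1) * w q q' + 1)
    (M : Type*) [Fintype M] (m : ℕ) (hm : Fintype.card M = m)
    (m₀ : M) (αu : M → Q → M) (αn : M → Q → Q)
    (hvalid : ∀ mem s, s ∈ Q1 → E s (αn mem s))
    (q₀ : Q)
    (Wplus : ℕ) (hWp : ∀ q q', E q q' → |wplus q q'| ≤ (Wplus : ℤ))
    (hcyc : ∀ (k : ℕ) (c : ℕ → M × Q), 0 < k → c 0 = c k →
      (∀ j < k, EProd Q1 E αu αn (c j) (c (j + 1))) →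
      (∀ j ≤ k, Relation.ReflTransGen (EProd Q1 E αu αn) (m₀, q₀) (c j)) →
      (0 ≤ ∑ j ∈ Finset.range k, wplus (c j).2 (c (j + 1)).2 ∧
        ∃ j ∈ Finset.range (k + 1), Even (p (c j).2) ∧
          ∀ l ∈ Finset.range (k + 1), p (c j).2 ≤ p (c l).2)) :
    ∀ ρ, TransOutcome Q1 E αu αn m₀ q₀ ρ →
      ParityCond p ρ ∧ EnergyCond wplus (m * Fintype.card Q * Wplus) ρ := by
  classical
  intro ρ hρ
  constructor
  · -- Parity condition
    -- threshold after which every visited state occurs infinitely often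
    have hch : ∀ q : Q, ∃ N, ¬ InfOften ρ q → ∀ n, N ≤ n → ρ n ≠ q := by
      intro q
      by_cases hq : InfOften ρ q
      · exact ⟨0, fun h => absurd hq h⟩
      · unfold InfOften at hq
        push_neg at hq
        obtain ⟨N, hN⟩ := hq
        exact ⟨N, fun _ n hn => hN n hn⟩
    choose Nf hNf using hch
    set T := Finset.univ.sup Nf with hTdef
    have hT : ∀ n, T ≤ n → InfOften ρ (ρ n) := by
      intro n hn
      by_contra hcon
      exact hNf (ρ n) hcon n (le_trans (Finset.le_sup (Finset.mem_univ _)) hn) rfl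
    -- a product state occurring infinitely often
    have hs : ∃ s : M × Q, ∀ N, ∃ n, N ≤ n ∧ (MemRun αu m₀ ρ n, ρ n) = s := by
      obtain ⟨s, hsinf⟩ :=
        Finite.exists_infinite_fiber (fun n => (MemRun αu m₀ ρ n, ρ n))
      refine ⟨s, fun N => ?_⟩
      have hsinf' : ((fun n => (MemRun αu m₀ ρ n, ρ n)) ⁻¹' {s}).Infinite :=
        Set.infinite_coe_iff.mp hsinf
      obtain ⟨n, hns, hn⟩ := hsinf'.exists_gt N
      exact ⟨n, hn.le, hns⟩
    obtain ⟨s, hs⟩ := hs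
    obtain ⟨n₁, hn₁T, hn₁s⟩ := hs T
    -- occurrence times after n₁ for each inf-often state
    have hocc : ∀ q : Q, ∃ t, InfOften ρ q → (n₁ ≤ t ∧ ρ t = q) := by
      intro q
      by_cases hq : InfOften ρ q
      · obtain ⟨t, ht⟩ := hq n₁
        exact ⟨t, fun _ => ht⟩
      · exact ⟨0, fun h => absurd h hq⟩
    choose tf htf using hocc
    obtain ⟨n₂, hn₂B, hn₂s⟩ := hs (max (Finset.univ.sup tf) n₁ + 1)
    have hn₁₂ : n₁ < n₂ := by omega
    set k := n₂ - n₁ with hkdef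
    have hk : 0 < k := by omega
    have hmain := hcyc k (fun l => (MemRun αu m₀ ρ (n₁ + l), ρ (n₁ + l))) hk
      (by
        have e : n₁ + k = n₂ := by omega
        simp only [Nat.add_zero, e]
        rw [hn₁s, hn₂s])
      (fun l _ => sigma_step Q1 E αu αn m₀ q₀ ρ hρ (n₁ + l))
      (fun l _ => sigma_reach Q1 E αu αn m₀ q₀ ρ hρ (n₁ + l))
    obtain ⟨-, j, hjmem, hjeven, hjmin⟩ := hmain
    simp only [Finset.mem_range] at hjmem
    refine ⟨ρ (n₁ + j), hT _ (by omega), hjeven, ?_⟩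
    intro q' hq'
    obtain ⟨hle, heq⟩ := htf q' hq'
    have hsup : tf q' ≤ Finset.univ.sup tf := Finset.le_sup (Finset.mem_univ _)
    have h2 : tf q' - n₁ ∈ Finset.range (k + 1) := by
      simp only [Finset.mem_range]
      omega
    have h3 := hjmin _ h2
    simp only at h3
    rw [show n₁ + (tf q' - n₁) = tf q' by omega, heq] at h3
    exact h3
  · -- Energy condition
    have hW0 : (0 : ℤ) ≤ (Wplus : ℤ) :=
      le_trans (abs_nonneg _) (hWp _ _ (hρ.2.1 0))
    have energy : ∀ n (ρ' : ℕ → Q), TransOutcome Q1 E αu αn m₀ q₀ ρ' →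
        0 ≤ ((m * Fintype.card Q * Wplus : ℕ) : ℤ) + EL wplus ρ' n := by
      intro n
      induction n using Nat.strong_induction_on with
      | _ n ih =>
        intro ρ' hρ'
        by_cases hn : n ≤ m * Fintype.card Q
        · -- short prefix: bound each edge by -W⁺
          have hbnd : ∀ k ∈ Finset.range n,
              -(Wplus : ℤ) ≤ wplus (ρ' k) (ρ' (k + 1)) :=
            fun k _ => (abs_le.mp (hWp _ _ (hρ'.2.1 k))).1
          have h1 : (n : ℤ) * (-(Wplus : ℤ)) ≤ EL wplus ρ' n := by
            have := Finset.sum_le_sum hbnd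
            simpa [EL, Finset.sum_const, nsmul_eq_mul, mul_comm] using this
          have h2 : (n : ℤ) * (Wplus : ℤ) ≤ (m : ℤ) * (Fintype.card Q : ℤ) * Wplus := by
            have hn' : (n : ℤ) ≤ (m : ℤ) * (Fintype.card Q : ℤ) := by exact_mod_cast hn
            nlinarith
          push_cast
          nlinarith
        · -- long prefix: cut out a cycle
          push_neg at hn
          have hcard : Fintype.card (M × Q) <
              Fintype.card (Fin (m * Fintype.card Q + 1)) := by
            simp [Fintype.card_prod, hm]
          obtain ⟨a, b, hne, hfe⟩ := Fintype.exists_ne_map_eq_of_card_lt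
            (fun l : Fin (m * Fintype.card Q + 1) => (MemRun αu m₀ ρ' l, ρ' l)) hcard
          obtain ⟨i, j, hij, hjle, heqm, heqq⟩ : ∃ i j : ℕ, i < j ∧
              j ≤ m * Fintype.card Q ∧
              MemRun αu m₀ ρ' i = MemRun αu m₀ ρ' j ∧ ρ' i = ρ' j := by
            have h1 := congrArg Prod.fst hfe
            have h2 := congrArg Prod.snd hfe
            simp only at h1 h2
            rcases hne.lt_or_gt with hab | hab
            · exact ⟨a, b, hab, by omega, h1, h2⟩
            · exact ⟨b, a, hab, by omega, h1.symm, h2.symm⟩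
          obtain ⟨hout', hEL⟩ := surgery Q1 E αu αn m₀ q₀ ρ' hρ' wplus hij heqm heqq
          have hcycsum : 0 ≤ ∑ t ∈ Finset.Ico i j, wplus (ρ' t) (ρ' (t + 1)) := by
            have hc := (hcyc (j - i) (fun l => (MemRun αu m₀ ρ' (i + l), ρ' (i + l)))
              (by omega)
              (by
                have e : i + (j - i) = j := by omega
                simp only [Nat.add_zero, e]
                rw [heqm, heqq])
              (fun l _ => sigma_step Q1 E αu αn m₀ q₀ ρ' hρ' (i + l))
              (fun l _ => sigma_reach Q1 E αu αn m₀ q₀ ρ' hρ' (i + l))).1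
            simp only at hc
            rw [Finset.sum_Ico_eq_sum_range]
            exact hc
          have hlt : n - (j - i) < n := by omega
          have hrec := ih (n - (j - i)) hlt
            (fun l => ρ' (if l < i then l else l + (j - i))) hout'
          rw [hEL n (by omega)] at hrec
          linarith
    intro n
    exact energy n ρ hρ
end

section
/- Let ⟨G,p,w⟩ be a game graph with priority function p and integer weight function w, let ε = 1/(|Q|+1), and let σ be a player-1 strategy with finite memory such that every cycle C in the product graph G_σ reachable from the initial state ⟨m₀,q₀⟩ has even minimal priority and nonnegative sum of weights with respect to w + ε (equivalently, (|Q|+1)·Σ_{e∈C} w(e) + |C| ≥ 0). Then every outcome ρ of σ from q₀ satisfies the parity condition and has mean-payoff value MP(w,ρ) ≥ −ε. -/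
variable {Q : Type*}

section Aux16

variable {M : Type*} {Q1 : Set Q} {E : Q → Q → Prop} {αu : M → Q → M}
  {αn : M → Q → Q} {m₀ : M} {q₀ : Q}

/-- Admissible path in the product graph starting at `(m₀, q₀)`. -/
def Adm16 (Q1 : Set Q) (E : Q → Q → Prop) (αu : M → Q → M) (αn : M → Q → Q)
    (m₀ : M) (q₀ : Q) (d : ℕ → M × Q) : Prop :=
  d 0 = (m₀, q₀) ∧ ∀ i, EProd Q1 E αu αn (d i) (d (i + 1))

/-- Partial sums of a weight along a product path. -/
def FS16 {M : Type*} (w' : M × Q → M × Q → ℤ) (d : ℕ → M × Q) (n : ℕ) : ℤ :=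
  ∑ t ∈ Finset.range n, w' (d t) (d (t + 1))

lemma adm16_reach {d : ℕ → M × Q} (hd : Adm16 Q1 E αu αn m₀ q₀ d) :
    ∀ n, Relation.ReflTransGen (EProd Q1 E αu αn) (m₀, q₀) (d n) := by
  intro n
  induction n with
  | zero => rw [hd.1]
  | succ n ih => exact ih.tail (hd.2 n)

lemma FS16_add {M : Type*} (w' : M × Q → M × Q → ℤ) (d : ℕ → M × Q) (a b : ℕ) :
    FS16 w' d (a + b) = FS16 w' d a +
      ∑ t ∈ Finset.range b, w' (d (a + t)) (d (a + t + 1)) := by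
  induction b with
  | zero => simp [FS16]
  | succ b ih =>
      have h : a + (b + 1) = (a + b) + 1 := rfl
      rw [h, FS16, Finset.sum_range_succ, ← FS16, ih, Finset.sum_range_succ]
      ring

lemma splice16 {d : ℕ → M × Q} (hd : Adm16 Q1 E αu αn m₀ q₀ d) {i j : ℕ}
    (hij : i < j) (heq : d i = d j) (w' : M × Q → M × Q → ℤ) :
    Adm16 Q1 E αu αn m₀ q₀ (fun n => if n < i then d n else d (n + (j - i))) ∧
    ∀ n, i ≤ n → FS16 w' (fun n => if n < i then d n else d (n + (j - i))) n +
      (FS16 w' d j - FS16 w' d i) = FS16 w' d (n + (j - i)) := by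
  set d' : ℕ → M × Q := fun n => if n < i then d n else d (n + (j - i)) with hd'
  have hagree : ∀ t, t ≤ i → d' t = d t := by
    intro t ht
    rcases lt_or_eq_of_le ht with h | h
    · simp [hd', h]
    · subst h
      simp only [hd', lt_irrefl, if_false]
      rw [show t + (j - t) = j from by omega, ← heq]
  have hge : ∀ t, i ≤ t → d' t = d (t + (j - i)) := by
    intro t ht
    simp only [hd']
    rw [if_neg (by omega)]
  constructor
  · constructor
    · rw [hagree 0 (Nat.zero_le _), hd.1]
    · intro n
      by_cases hn : n + 1 ≤ i
      · rw [hagree n (by omega), hagree (n + 1) hn]; exact hd.2 n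
      · push_neg at hn
        have h1 : d' (n + 1) = d (n + 1 + (j - i)) := hge (n + 1) (by omega)
        by_cases hn2 : n < i
        · have hni : n + 1 = i := by omega
          rw [hagree n (by omega), h1, show n + 1 + (j - i) = j from by omega, ← heq, ← hni]
          exact hd.2 n
        · have h0 : d' n = d (n + (j - i)) := hge n (by omega)
          rw [h0, h1, show n + 1 + (j - i) = n + (j - i) + 1 from by omega]
          exact hd.2 (n + (j - i))
  · intro n hn
    induction n, hn using Nat.le_induction with
    | base =>
        have h1 : FS16 w' d' i = FS16 w' d i := by
          apply Finset.sum_congr rfl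
          intro t ht
          rw [Finset.mem_range] at ht
          rw [hagree t (by omega), hagree (t + 1) (by omega)]
        rw [h1, show i + (j - i) = j from by omega]; ring
    | succ n hn ih =>
        have h0 : d' n = d (n + (j - i)) := hge n (by omega)
        have h1 : d' (n + 1) = d (n + 1 + (j - i)) := hge (n + 1) (by omega)
        have e1 : FS16 w' d' (n + 1) = FS16 w' d' n + w' (d' n) (d' (n + 1)) :=
          Finset.sum_range_succ _ _
        have e2 : FS16 w' d (n + 1 + (j - i)) =
            FS16 w' d (n + (j - i)) + w' (d (n + (j - i))) (d (n + (j - i) + 1)) := by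
          rw [show n + 1 + (j - i) = (n + (j - i)) + 1 from by omega]
          exact Finset.sum_range_succ _ _
        rw [e1, e2, ← ih, h0, h1, show n + 1 + (j - i) = n + (j - i) + 1 from by omega]
        ring

lemma bound16 [Fintype Q] [Fintype M] (w' : M × Q → M × Q → ℤ)
    (hseg : ∀ d, Adm16 Q1 E αu αn m₀ q₀ d → ∀ i j : ℕ, i < j → d i = d j →
      0 ≤ FS16 w' d j - FS16 w' d i)
    (C : ℤ) (hC0 : 0 ≤ C) (hC : ∀ x y, -C ≤ w' x y) :
    ∀ n (d : ℕ → M × Q), Adm16 Q1 E αu αn m₀ q₀ d →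
      -((Fintype.card (M × Q) : ℤ) * C) ≤ FS16 w' d n := by
  intro n
  induction n using Nat.strong_induction_on with
  | _ n IH =>
    intro d hd
    set N := Fintype.card (M × Q) with hN
    by_cases hn : n ≤ N
    · have h1 : ∀ t ∈ Finset.range n, -C ≤ w' (d t) (d (t + 1)) := fun t _ => hC _ _
      have h2 : (Finset.range n).card • (-C) ≤ FS16 w' d n :=
        Finset.card_nsmul_le_sum _ _ _ h1
      rw [Finset.card_range, nsmul_eq_mul] at h2
      have h3 : (n : ℤ) * (-C) = -((n : ℤ) * C) := by ring
      rw [h3] at h2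
      have h4 : (n : ℤ) * C ≤ (N : ℤ) * C :=
        mul_le_mul_of_nonneg_right (by exact_mod_cast hn) hC0
      linarith
    · push_neg at hn
      have key : ∀ i j : ℕ, i < j → j ≤ N → d i = d j →
          -((N : ℤ) * C) ≤ FS16 w' d n := by
        intro i j hij hjN heq
        obtain ⟨hadm, hsum⟩ := splice16 hd hij heq w'
        have hin : i ≤ n - (j - i) := by omega
        have h1 := hsum (n - (j - i)) hin
        rw [show n - (j - i) + (j - i) = n from by omega] at h1
        have h2 := hseg d hd i j hij heq
        have h3 := IH (n - (j - i)) (by omega) _ hadm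
        linarith
      obtain ⟨a, b, hab, hfab⟩ :=
        Fintype.exists_ne_map_eq_of_card_lt (fun t : Fin (N + 1) => d t)
          (by simp only [Fintype.card_fin, hN, Fintype.card_prod]; omega)
      rcases lt_or_gt_of_ne hab with h | h
      · exact key a b (by exact_mod_cast h) (by omega) hfab
      · exact key b a (by exact_mod_cast h) (by omega) hfab.symm

end Aux16

/-- with `ε = 1/(|Q|+1)`, if `σ` is a finite-memory strategy such that
every cycle `C` of the product graph `G_σ` reachable from `⟨m₀,q₀⟩` has even minimal
priority and nonnegative sum of weights with respect to `w + ε` (i.e.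
`(|Q|+1)·Σ_{e∈C} w(e) + |C| ≥ 0`), then every outcome `ρ` of `σ` from `q₀` satisfies the
parity condition and has mean-payoff value `MP(w,ρ) ≥ −ε`. -/
theorem stmt16 {Q : Type*} [Fintype Q] (Q1 : Set Q) (E : Q → Q → Prop)
    (hE : ∀ q, ∃ q', E q q') (p : Q → ℕ) (w : Q → Q → ℤ)
    (M : Type*) [Fintype M] (m₀ : M) (αu : M → Q → M) (αn : M → Q → Q)
    (hvalid : ∀ mem s, s ∈ Q1 → E s (αn mem s))
    (q₀ : Q)
    (hcyc : ∀ (k : ℕ) (c : ℕ → M × Q), 0 < k → c 0 = c k →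
      (∀ j < k, EProd Q1 E αu αn (c j) (c (j + 1))) →
      (∀ j ≤ k, Relation.ReflTransGen (EProd Q1 E αu αn) (m₀, q₀) (c j)) →
      (0 ≤ ((Fintype.card Q : ℤ) + 1) *
          (∑ j ∈ Finset.range k, w (c j).2 (c (j + 1)).2) + (k : ℤ) ∧
        ∃ j ∈ Finset.range (k + 1), Even (p (c j).2) ∧
          ∀ l ∈ Finset.range (k + 1), p (c j).2 ≤ p (c l).2)) :
    ∀ ρ, TransOutcome Q1 E αu αn m₀ q₀ ρ →
      ParityCond p ρ ∧
        -(1 / ((Fintype.card Q : ℝ) + 1)) ≤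
          Filter.liminf (fun n : ℕ => (EL w ρ n : ℝ) / (n : ℝ)) Filter.atTop := by
  classical
  intro ρ hρ
  obtain ⟨hρ0, hplay, hstrat⟩ := hρ
  set c : ℕ → M × Q := fun n => (MemRun αu m₀ ρ n, ρ n) with hc
  have hAdm : Adm16 Q1 E αu αn m₀ q₀ c := by
    constructor
    · simp [hc, MemRun, hρ0]
    · intro n
      refine ⟨rfl, ?_⟩
      by_cases hq : ρ n ∈ Q1
      · exact Or.inl ⟨hq, hstrat n hq⟩
      · exact Or.inr ⟨hq, hplay n⟩
  -- Parity part
  have hparity : ParityCond p ρ := by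
    have hproj : ∀ x : M × Q, InfOften c x → InfOften ρ x.2 := by
      intro x hx N
      obtain ⟨n, hn, he⟩ := hx N
      exact ⟨n, hn, congrArg Prod.snd he⟩
    have key : ∀ x : M × Q, ∃ N, ∀ n, N ≤ n → c n = x → InfOften c x := by
      intro x
      by_cases h : InfOften c x
      · exact ⟨0, fun _ _ _ => h⟩
      · unfold InfOften at h
        push_neg at h
        obtain ⟨N, hN⟩ := h
        exact ⟨N, fun n hn hcn => absurd hcn (hN n hn)⟩
    choose Nf hNf using key
    set N := Finset.univ.sup Nf with hNdef
    have hN : ∀ n, N ≤ n → InfOften c (c n) := fun n hn =>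
      hNf (c n) n (le_trans (Finset.le_sup (Finset.mem_univ _)) hn) rfl
    have occ : ∀ x : M × Q, ∃ t, N ≤ t ∧ (InfOften c x → c t = x) := by
      intro x
      by_cases h : InfOften c x
      · obtain ⟨t, ht, hct⟩ := h N
        exact ⟨t, ht, fun _ => hct⟩
      · exact ⟨N, le_refl N, fun h' => absurd h' h⟩
    choose tf htf1 htf2 using occ
    set T := Finset.univ.sup tf with hTdef
    obtain ⟨n2, hn2, hcn2⟩ := hN N le_rfl (max (T + 1) (N + 1))
    set k := n2 - N with hk
    have hk0 : 0 < k := by omega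
    obtain ⟨_, j, hjmem, hjeven, hjmin⟩ :=
      hcyc k (fun t => c (N + t)) hk0
        (by rw [Nat.add_zero, show N + k = n2 from by omega, hcn2])
        (fun t _ => hAdm.2 (N + t))
        (fun t _ => adm16_reach hAdm (N + t))
    refine ⟨(c (N + j)).2, hproj _ (hN (N + j) (by omega)), hjeven, ?_⟩
    intro q' hq'
    obtain ⟨n', hn', hρn'⟩ := hq' N
    have hx' : InfOften c (c n') := hN n' hn'
    have ht' : c (tf (c n')) = c n' := htf2 _ hx'
    have h1 : N ≤ tf (c n') := htf1 _
    have h2 : tf (c n') ≤ T := Finset.le_sup (Finset.mem_univ _)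
    have hl : tf (c n') - N ∈ Finset.range (k + 1) := Finset.mem_range.2 (by omega)
    have h3 := hjmin (tf (c n') - N) hl
    have he : c (N + (tf (c n') - N)) = c n' := by
      rw [show N + (tf (c n') - N) = tf (c n') from by omega]; exact ht'
    calc p (c (N + j)).2 ≤ p (c (N + (tf (c n') - N))).2 := h3
      _ = p (c n').2 := by rw [he]
      _ = p q' := by rw [show (c n').2 = q' from hρn']
  refine ⟨hparity, ?_⟩
  -- Energy part
  set K : ℤ := (Fintype.card Q : ℤ) + 1 with hK
  set w' : M × Q → M × Q → ℤ := fun x y => K * w x.2 y.2 + 1 with hw'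
  set C : ℤ := ∑ x : M × Q, ∑ y : M × Q, |w' x y| with hCdef
  have hC0 : 0 ≤ C := Finset.sum_nonneg fun _ _ => Finset.sum_nonneg fun _ _ => abs_nonneg _
  have hC : ∀ x y : M × Q, -C ≤ w' x y := by
    intro x y
    have h1 : |w' x y| ≤ ∑ y' : M × Q, |w' x y'| :=
      Finset.single_le_sum (f := fun y' => |w' x y'|)
        (fun _ _ => abs_nonneg _) (Finset.mem_univ y)
    have h2 : ∑ y' : M × Q, |w' x y'| ≤ C :=
      Finset.single_le_sum (f := fun x' => ∑ y' : M × Q, |w' x' y'|)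
        (fun _ _ => Finset.sum_nonneg fun _ _ => abs_nonneg _) (Finset.mem_univ x)
    have h3 := neg_abs_le (w' x y)
    linarith
  have hseg : ∀ d, Adm16 Q1 E αu αn m₀ q₀ d → ∀ i j : ℕ, i < j → d i = d j →
      0 ≤ FS16 w' d j - FS16 w' d i := by
    intro d hd i j hij heq
    have h1 := FS16_add w' d i (j - i)
    rw [show i + (j - i) = j from by omega] at h1
    have h2 := (hcyc (j - i) (fun t => d (i + t)) (by omega)
      (by rw [Nat.add_zero, show i + (j - i) = j from by omega, ← heq])
      (fun t _ => hd.2 (i + t))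
      (fun t _ => adm16_reach hd (i + t))).1
    have h3 : ∑ t ∈ Finset.range (j - i), w' (d (i + t)) (d (i + t + 1)) =
        K * (∑ t ∈ Finset.range (j - i), w (d (i + t)).2 (d (i + t + 1)).2) +
          ((j : ℤ) - i) := by
      simp only [hw', Finset.sum_add_distrib, Finset.sum_const, Finset.card_range,
        ← Finset.mul_sum, nsmul_eq_mul, mul_one]
      have : ((j - i : ℕ) : ℤ) = (j : ℤ) - i := by omega
      rw [this]
    simp only [← Nat.add_assoc] at h2
    rw [h1, h3]
    have : ((j - i : ℕ) : ℤ) = (j : ℤ) - i := by omega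
    rw [this] at h2
    linarith
  set B : ℤ := (Fintype.card (M × Q) : ℤ) * C with hBdef
  have hB0 : 0 ≤ B := mul_nonneg (by positivity) hC0
  have hB : ∀ n : ℕ, -B ≤ K * EL w ρ n + n := by
    intro n
    have h1 := bound16 w' hseg C hC0 hC n c hAdm
    have h2 : FS16 w' c n = K * EL w ρ n + n := by
      simp only [FS16, EL, hw', Finset.sum_add_distrib, Finset.sum_const,
        Finset.card_range, ← Finset.mul_sum, nsmul_eq_mul, mul_one]
      rfl
    rw [h2] at h1
    exact h1
  -- Real analysis
  set Kr : ℝ := (Fintype.card Q : ℝ) + 1 with hKrdef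
  have hKr : 0 < Kr := by positivity
  set Br : ℝ := (B : ℝ) with hBrdef
  have hBr0 : 0 ≤ Br := by rw [hBrdef]; exact_mod_cast hB0
  set f : ℕ → ℝ := fun n => (EL w ρ n : ℝ) / n with hf
  set g : ℕ → ℝ := fun n => (-Br - n) / (Kr * n) with hg
  have hfg : ∀ n : ℕ, 1 ≤ n → g n ≤ f n := by
    intro n hn
    have h0 : (0 : ℝ) < n := by exact_mod_cast hn
    have h1 : -Br - n ≤ Kr * (EL w ρ n : ℝ) := by
      have := hB n
      have hcast : -(B : ℝ) ≤ (K : ℝ) * (EL w ρ n : ℝ) + n := by exact_mod_cast this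
      have hKK : (K : ℝ) = Kr := by rw [hK, hKrdef]; push_cast; ring
      rw [hKK] at hcast
      linarith
    have h2 : (-Br - n) / (Kr * n) ≤ (Kr * (EL w ρ n : ℝ)) / (Kr * n) := by
      gcongr
    have h3 : (Kr * (EL w ρ n : ℝ)) / (Kr * n) = (EL w ρ n : ℝ) / n :=
      mul_div_mul_left _ _ (ne_of_gt hKr)
    simp only [hg, hf]
    rw [h3] at h2
    exact h2
  have hgt : Filter.Tendsto g Filter.atTop (nhds (-(1 / Kr))) := by
    have h1 : Filter.Tendsto (fun n : ℕ => (-Br / Kr) / n - 1 / Kr) Filter.atTop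
        (nhds (0 - 1 / Kr)) :=
      (tendsto_const_div_atTop_nhds_zero_nat _).sub_const _
    rw [zero_sub] at h1
    apply h1.congr'
    filter_upwards [Filter.eventually_ge_atTop 1] with n hn
    have h0 : (n : ℝ) ≠ 0 := by positivity
    simp only [hg]
    field_simp
  by_cases hco : Filter.IsCoboundedUnder (· ≥ ·) Filter.atTop f
  · have h2 : Filter.liminf g Filter.atTop ≤ Filter.liminf f Filter.atTop :=
      Filter.liminf_le_liminf (Filter.eventually_atTop.2 ⟨1, hfg⟩)
        hgt.isBoundedUnder_ge hco
    rw [hgt.liminf_eq] at h2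
    exact h2
  · have hnb : ¬ BddAbove {a : ℝ | ∀ᶠ n in Filter.atTop, a ≤ f n} := by
      intro hb
      apply hco
      obtain ⟨b, hb⟩ := hb
      refine ⟨b, fun a ha => ?_⟩
      exact hb (Filter.eventually_map.1 ha)
    rw [Filter.liminf_eq, Real.sSup_of_not_bddAbove hnb]
    exact neg_nonpos.2 (le_of_lt (one_div_pos.2 hKr))
end
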